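/- arXiv:math/0602542 — 6 statements merged into one kernel-verified Lean document; each statement's English description precedes it below -/
import Mathlib

section
/- A topological ring $A$ is admissible (linearly topologized by a countable descending chain of ideals, separated, complete, with an ideal of definition) if and only if $A$ is isomorphic as a topological ring to the limit $\varprojlim A_i$ of a projective system of discrete rings $A_1 \leftarrow A_2 \leftarrow \cdots$ indexed by $\mathbb{N}$ such that each transition map $A_{i+1} \to A_i$ is surjective with kernel consisting of nilpotent elements. -/
open Filter Topology

/-- The descending chain `I` of ideals is a basis of neighborhoods of `0`
(this is the `{Iᵢ}`-topology). -/
def IsChainBasis (A : Type*) [CommRing A] [TopologicalSpace A] (I : ℕ → Ideal A) : Prop :=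
  Antitone I ∧ ∀ s : Set A, s ∈ nhds (0 : A) ↔ ∃ i, (I i : Set A) ⊆ s

/-- An ideal of definition: an open ideal all of whose elements are topologically nilpotent. -/
def IsIdealOfDefinition (A : Type*) [CommRing A] [TopologicalSpace A] (J : Ideal A) : Prop :=
  IsOpen (J : Set A) ∧ ∀ x ∈ J, Filter.Tendsto (fun n => x ^ n) Filter.atTop (nhds (0 : A))

/-- An admissible ring: a topological ring, linearly topologized with a countable chain of
ideals as a basis of neighborhoods of `0`, separated, complete, admitting an ideal of
definition. -/
structure IsAdmissible (A : Type*) [CommRing A] [TopologicalSpace A] : Prop where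
  topRing : IsTopologicalRing A
  exists_chain : ∃ I : ℕ → Ideal A, IsChainBasis A I
  separated : ∀ x : A, (∀ U ∈ nhds (0 : A), x ∈ U) → x = 0
  complete : ∀ f : ℕ → A,
    (∀ U ∈ nhds (0 : A), ∃ N, ∀ m ≥ N, ∀ n ≥ N, f m - f n ∈ U) →
    ∃ a : A, ∀ U ∈ nhds (0 : A), ∃ N, ∀ n ≥ N, a - f n ∈ U
  exists_idealOfDef : ∃ J : Ideal A, IsIdealOfDefinition A J

/-- The topology of `A` is the `J`-adic topology: the powers `J ^ n` form a basis of
neighborhoods of `0`. -/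
def IsAdicTopology (A : Type*) [CommRing A] [TopologicalSpace A] (J : Ideal A) : Prop :=
  ∀ s : Set A, s ∈ nhds (0 : A) ↔ ∃ n : ℕ, ((J ^ n : Ideal A) : Set A) ⊆ s

universe u

/-- A presentation of the topological ring `A` as the inverse limit of a projective system of
discrete rings `B 0 ← B 1 ← ⋯`, with surjective transition maps whose kernels consist of
nilpotent elements.  The fields `inj` and `surj` say that the canonical map from `A` to the
limit is bijective, and `nhds_basis` says that the topology of `A` corresponds to the limit
of the discrete topologies (a basis of neighborhoods of `0` is given by the kernels of the
projections). -/
structure DiscreteLimitPresentation (A : Type u) [CommRing A] [TopologicalSpace A] :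
    Type (u + 1) where
  B : ℕ → Type u
  [ring : ∀ i, CommRing (B i)]
  trans : ∀ i, B (i + 1) →+* B i
  trans_surj : ∀ i, Function.Surjective (trans i)
  trans_ker_nilpotent : ∀ i, ∀ x : B (i + 1), trans i x = 0 → IsNilpotent x
  proj : ∀ i, A →+* B i
  compat : ∀ i, (trans i).comp (proj (i + 1)) = proj i
  inj : ∀ a : A, (∀ i, proj i a = 0) → a = 0
  surj : ∀ g : ∀ i, B i, (∀ i, trans i (g (i + 1)) = g i) → ∃ a : A, ∀ i, proj i a = g i
  nhds_basis : ∀ s : Set A, s ∈ nhds (0 : A) ↔ ∃ i, {a : A | proj i a = 0} ⊆ s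

/-- A topological ring is admissible iff it is isomorphic, as a topological ring, to the
inverse limit of a projective system of discrete rings indexed by `ℕ` whose transition maps
are surjective with kernels consisting of nilpotent elements. -/
theorem stmt_1 (A : Type u) [CommRing A] [TopologicalSpace A] [IsTopologicalRing A] :
    IsAdmissible A ↔ Nonempty (DiscreteLimitPresentation A) := by
  constructor
  · rintro ⟨_, ⟨I, hIanti, hIbasis⟩, hsep, hcomp, J, hJopen, hJnil⟩
    set K : ℕ → Ideal A := fun i => I i ⊓ J with hKdef
    have hKanti : Antitone K := fun m n h => inf_le_inf_right J (hIanti h)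
    have hJnhds : (J : Set A) ∈ nhds (0 : A) := hJopen.mem_nhds J.zero_mem
    obtain ⟨i0, hi0⟩ := (hIbasis J).mp hJnhds
    have hKnhds : ∀ i, ((K i : Set A)) ∈ nhds (0 : A) := by
      intro i
      refine (hIbasis _).mpr ⟨max i i0, fun x hx => ?_⟩
      exact ⟨hIanti (le_max_left _ _) hx, hi0 (hIanti (le_max_right _ _) hx)⟩
    have hKbasis : ∀ s : Set A, s ∈ nhds (0 : A) ↔ ∃ i, (K i : Set A) ⊆ s := by
      intro s
      constructor
      · intro hs
        obtain ⟨i, hi⟩ := (hIbasis s).mp hs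
        exact ⟨i, fun x hx => hi hx.1⟩
      · rintro ⟨i, hi⟩
        exact Filter.mem_of_superset (hKnhds i) hi
    -- lifts in quotients
    refine ⟨{
      B := fun i => A ⧸ K i
      trans := fun i => Ideal.Quotient.factor (hKanti (Nat.le_succ i))
      trans_surj := ?_
      trans_ker_nilpotent := ?_
      proj := fun i => Ideal.Quotient.mk (K i)
      compat := fun i => Ideal.Quotient.factor_comp_mk _
      inj := ?_
      surj := ?_
      nhds_basis := ?_ }⟩
    · intro i y
      obtain ⟨a, rfl⟩ := Ideal.Quotient.mk_surjective y
      exact ⟨Ideal.Quotient.mk _ a, Ideal.Quotient.factor_mk _ _⟩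
    · intro i x hx
      obtain ⟨a, rfl⟩ := Ideal.Quotient.mk_surjective x
      rw [Ideal.Quotient.factor_mk, Ideal.Quotient.eq_zero_iff_mem] at hx
      have haJ : a ∈ J := (Submodule.mem_inf.mp hx).2
      have htend := hJnil a haJ
      have h := htend (hKnhds (i + 1))
      rw [Filter.mem_map, Filter.mem_atTop_sets] at h
      obtain ⟨N, hN⟩ := h
      refine ⟨N, ?_⟩
      rw [← map_pow, Ideal.Quotient.eq_zero_iff_mem]
      exact hN N le_rfl
    · intro a ha
      apply hsep
      intro U hU
      obtain ⟨i, hi⟩ := (hKbasis U).mp hU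
      exact hi (Ideal.Quotient.eq_zero_iff_mem.mp (ha i))
    · intro g hg
      choose f hf using fun i => Ideal.Quotient.mk_surjective (g i)
      have step : ∀ i, f (i + 1) - f i ∈ K i := by
        intro i
        rw [← Ideal.Quotient.eq]
        have : Ideal.Quotient.mk (K i) (f (i + 1)) =
            Ideal.Quotient.factor (hKanti (Nat.le_succ i))
              (Ideal.Quotient.mk (K (i + 1)) (f (i + 1))) :=
          (Ideal.Quotient.factor_mk _ _).symm
        rw [this, hf (i + 1), hg i, hf i]
      have tele : ∀ n m, n ≤ m → f m - f n ∈ K n := by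
        intro n m hm
        induction m, hm using Nat.le_induction with
        | base => simpa using (K n).zero_mem
        | succ m hm ih =>
          have h1 : f (m + 1) - f m ∈ K n := hKanti hm (step m)
          have := (K n).add_mem h1 ih
          simpa [sub_add_sub_cancel] using this
      obtain ⟨a, ha⟩ := hcomp f (by
        intro U hU
        obtain ⟨j, hj⟩ := (hKbasis U).mp hU
        refine ⟨j, fun m hm n hn => hj ?_⟩
        have h1 : f m - f j ∈ K j := tele j m hm
        have h2 : f n - f j ∈ K j := tele j n hn
        simpa [sub_sub_sub_cancel_right] using (K j).sub_mem h1 h2)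
      refine ⟨a, fun i => ?_⟩
      obtain ⟨N, hN⟩ := ha (K i) (hKnhds i)
      have h1 : a - f (max N i) ∈ K i := hN _ (le_max_left _ _)
      have h2 : f (max N i) - f i ∈ K i := tele i _ (le_max_right _ _)
      have h3 : a - f i ∈ K i := by
        simpa [sub_add_sub_cancel] using (K i).add_mem h1 h2
      rw [← hf i, Ideal.Quotient.eq]
      exact h3
    · intro s
      rw [hKbasis]
      have hset : ∀ i, {a : A | Ideal.Quotient.mk (K i) a = 0} = (K i : Set A) := by
        intro i
        ext a
        exact Ideal.Quotient.eq_zero_iff_mem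
      refine exists_congr fun i => ?_
      show (K i : Set A) ⊆ s ↔ {a : A | Ideal.Quotient.mk (K i) a = 0} ⊆ s
      rw [hset i]
  · rintro ⟨P⟩
    letI : ∀ i, CommRing (P.B i) := P.ring
    set Kr : ℕ → Ideal A := fun i => RingHom.ker (P.proj i) with hKrdef
    have hsucc : ∀ i, Kr (i + 1) ≤ Kr i := by
      intro i a ha
      have ha' : P.proj (i + 1) a = 0 := ha
      show P.proj i a = 0
      rw [← P.compat i, RingHom.comp_apply, ha', map_zero]
    have hanti : Antitone Kr := antitone_nat_of_succ_le hsucc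
    have hset : ∀ i, {a : A | P.proj i a = 0} = (Kr i : Set A) := fun i => rfl
    have hKmem : ∀ i, (Kr i : Set A) ∈ nhds (0 : A) := fun i =>
      (P.nhds_basis _).mpr ⟨i, by rw [hset]⟩
    refine ⟨inferInstance, ⟨Kr, hanti, ?_⟩, ?_, ?_, ?_⟩
    · intro s
      rw [P.nhds_basis]
      constructor
      · rintro ⟨i, hi⟩
        exact ⟨i, by rw [← hset i]; exact hi⟩
      · rintro ⟨i, hi⟩
        exact ⟨i, by rw [hset i]; exact hi⟩
    · intro x hx
      apply P.inj
      intro i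
      exact hx _ (hKmem i)
    · intro f hf
      choose N hN using fun i => hf _ (hKmem i)
      set g : ∀ i, P.B i := fun i => P.proj i (f (N i)) with hgdef
      have hcompat : ∀ i, P.trans i (g (i + 1)) = g i := by
        intro i
        have e1 : P.trans i (g (i + 1)) = P.proj i (f (N (i + 1))) := by
          show P.trans i (P.proj (i + 1) (f (N (i + 1)))) = _
          rw [← RingHom.comp_apply, P.compat]
        rw [e1]
        show _ = P.proj i (f (N i))
        set n := max (N i) (N (i + 1)) with hn
        have h1 : f (N (i + 1)) - f n ∈ Kr (i + 1) :=
          hN (i + 1) _ le_rfl _ (le_max_right _ _)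
        have h2 : f (N i) - f n ∈ Kr i := hN i _ le_rfl _ (le_max_left _ _)
        have h3 : f (N (i + 1)) - f (N i) ∈ Kr i := by
          have := (Kr i).sub_mem (hsucc i h1) h2
          simpa [sub_sub_sub_cancel_right] using this
        have h4 : P.proj i (f (N (i + 1)) - f (N i)) = 0 := h3
        rw [map_sub, sub_eq_zero] at h4
        exact h4
      obtain ⟨a, ha⟩ := P.surj g hcompat
      refine ⟨a, fun U hU => ?_⟩
      obtain ⟨i, hi⟩ := (P.nhds_basis U).mp hU
      refine ⟨N i, fun n hn => hi ?_⟩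
      show P.proj i (a - f n) = 0
      have h1 : f (N i) - f n ∈ Kr i := hN i _ le_rfl _ hn
      have h1' : P.proj i (f (N i) - f n) = 0 := h1
      rw [map_sub, ha i]
      show P.proj i (f (N i)) - P.proj i (f n) = 0
      rw [map_sub, sub_eq_zero] at h1'
      rw [h1', sub_self]
    · refine ⟨Kr 0, ?_, ?_⟩
      · have h := AddSubgroup.isOpen_of_mem_nhds (Kr 0).toAddSubgroup
          (by rw [Submodule.coe_toAddSubgroup]; exact hKmem 0)
        rwa [Submodule.coe_toAddSubgroup] at h
      · intro x hx
        have hx0 : P.proj 0 x = 0 := hx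
        have claim : ∀ i, ∃ m, P.proj i (x ^ m) = 0 := by
          intro i
          induction i with
          | zero => exact ⟨1, by simpa using hx0⟩
          | succ i ih =>
            obtain ⟨m, hm⟩ := ih
            have h0 : P.trans i (P.proj (i + 1) (x ^ m)) = 0 := by
              rw [← RingHom.comp_apply, P.compat]
              exact hm
            obtain ⟨k, hk⟩ := P.trans_ker_nilpotent i _ h0
            exact ⟨m * k, by rw [pow_mul, map_pow, hk]⟩
        rw [Filter.tendsto_atTop']
        intro U hU
        obtain ⟨i, hi⟩ := (P.nhds_basis U).mp hU
        obtain ⟨m, hm⟩ := claim i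
        refine ⟨m, fun n hn => hi ?_⟩
        show P.proj i (x ^ n) = 0
        have hxn : x ^ n = x ^ (n - m) * x ^ m := by
          rw [← pow_add, Nat.sub_add_cancel hn]
        rw [hxn, map_mul, hm, mul_zero]
end

section
/- Let $A$ be an admissible ring and $I_1 \supseteq I_2 \supseteq \cdots$ a descending chain of open ideals of $A$ (not necessarily a basis of neighborhoods of $0$) such that $\sqrt{I_i} = \sqrt{I_1}$ for every $i$. Then $B := \varprojlim A/I_i$ is an admissible ring and the natural map $A \to B$ is a continuous ring homomorphism. -/
open Filter Topology

/-- The inverse limit `varprojlim A/Iᵢ` of the quotients along a descending chain of ideals,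
realized as the subring of compatible families in `Π i, A ⧸ I i`. -/
def limSubring (A : Type*) [CommRing A] (I : ℕ → Ideal A) (hI : ∀ i, I (i + 1) ≤ I i) :
    Subring (∀ i, A ⧸ I i) where
  carrier := {g | ∀ i, Ideal.Quotient.factor (S := I (i + 1)) (T := I i) (hI i) (g (i + 1)) = g i}
  zero_mem' := by intro i; simp
  one_mem' := by intro i; simp
  add_mem' := by intro a b ha hb; intro i; simp [map_add, ha i, hb i]
  mul_mem' := by intro a b ha hb; intro i; simp [map_mul, ha i, hb i]
  neg_mem' := by intro a ha i; simp [map_neg, ha i]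

/-- The inverse limit topology on `limSubring`, where each `A ⧸ I i` is discrete. -/
def limTopology (A : Type*) [CommRing A] (I : ℕ → Ideal A) (hI : ∀ i, I (i + 1) ≤ I i) :
    TopologicalSpace (limSubring A I hI) :=
  TopologicalSpace.induced Subtype.val
    (@Pi.topologicalSpace ℕ (fun i => A ⧸ I i) (fun _ => ⊥))

/-- The natural ring homomorphism `A → varprojlim A/Iᵢ`. -/
def toLim (A : Type*) [CommRing A] (I : ℕ → Ideal A) (hI : ∀ i, I (i + 1) ≤ I i) :
    A →+* limSubring A I hI :=
  RingHom.codRestrict (Pi.ringHom fun i => Ideal.Quotient.mk (I i)) _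
    (fun a i => Ideal.Quotient.factor_mk (hI i) a)

namespace Stmt2Aux
variable {A : Type*} [CommRing A] (I : ℕ → Ideal A) (hdesc : ∀ i, I (i + 1) ≤ I i)

local instance (i : ℕ) : TopologicalSpace (A ⧸ I i) := ⊥
local instance (i : ℕ) : DiscreteTopology (A ⧸ I i) := ⟨rfl⟩

lemma topEq : limTopology A I hdesc = (instTopologicalSpaceSubtype :
    TopologicalSpace (limSubring A I hdesc)) := rfl

/-- the kernel of the `i`-th projection -/
def K (i : ℕ) : Ideal (limSubring A I hdesc) :=
  RingHom.ker ((Pi.evalRingHom (fun j => A ⧸ I j) i).comp (limSubring A I hdesc).subtype)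

lemma mem_K {i : ℕ} {g : limSubring A I hdesc} :
    g ∈ K I hdesc i ↔ (g : ∀ j, A ⧸ I j) i = 0 := Iff.rfl

lemma val_eq_mk {g : limSubring A I hdesc} {j i : ℕ} (h : j ≤ i) {a : A}
    (hg : (g : ∀ k, A ⧸ I k) i = Ideal.Quotient.mk (I i) a) :
    (g : ∀ k, A ⧸ I k) j = Ideal.Quotient.mk (I j) a := by
  induction i, h using Nat.le_induction with
  | base => exact hg
  | succ i h ih =>
    apply ih
    have := (show ∀ i, Ideal.Quotient.factor (hdesc i) ((g : ∀ k, A ⧸ I k) (i + 1)) =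
      (g : ∀ k, A ⧸ I k) i from g.2) i
    rw [hg] at this
    rw [← this, Ideal.Quotient.factor_mk]

lemma val_eq_zero {g : limSubring A I hdesc} {j i : ℕ} (h : j ≤ i)
    (hg : (g : ∀ k, A ⧸ I k) i = 0) : (g : ∀ k, A ⧸ I k) j = 0 := by
  have := val_eq_mk I hdesc h (a := 0) (by simpa using hg)
  simpa using this

lemma K_antitone : Antitone (K I hdesc) := by
  apply antitone_nat_of_succ_le
  intro i g hg
  exact mem_K I hdesc |>.2 (val_eq_zero I hdesc (Nat.le_succ i) (mem_K I hdesc |>.1 hg))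

lemma mem_nhds_iff (s : Set (limSubring A I hdesc)) :
    s ∈ @nhds _ (limTopology A I hdesc) 0 ↔ ∃ i, (K I hdesc i : Set _) ⊆ s := by
  rw [topEq, nhds_induced, nhds_pi]
  have hpure : ∀ j : ℕ, 𝓝 ((0 : limSubring A I hdesc).val j) = pure 0 := by
    intro j; rw [nhds_discrete]; rfl
  constructor
  · rintro ⟨t, ht, hts⟩
    rw [Filter.mem_pi] at ht
    obtain ⟨F, hF, u, hu, hut⟩ := ht
    obtain ⟨n, hn⟩ := hF.bddAbove
    refine ⟨n, fun g hg => hts ?_⟩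
    apply hut
    intro j hj
    have h0 : (g : ∀ k, A ⧸ I k) j = 0 := val_eq_zero I hdesc (hn hj) (mem_K I hdesc |>.1 hg)
    have := hu j
    rw [hpure j, Filter.mem_pure] at this
    simpa [h0] using this
  · rintro ⟨i, hi⟩
    refine ⟨{h | h i = 0}, ?_, fun g hg => hi hg⟩
    rw [Filter.mem_pi]
    exact ⟨{i}, Set.finite_singleton i, fun _ => {0}, fun j => by rw [hpure j]; simp,
      fun h hh => hh i rfl⟩

lemma K_mem_nhds (i : ℕ) : (K I hdesc i : Set _) ∈ @nhds _ (limTopology A I hdesc) 0 :=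
  (mem_nhds_iff I hdesc _).2 ⟨i, le_refl _⟩

lemma isOpen_K (i : ℕ) : @IsOpen _ (limTopology A I hdesc) (K I hdesc i : Set _) := by
  rw [topEq]
  have h1 : IsOpen {h : ∀ j, A ⧸ I j | h i = 0} := by
    have := (continuous_apply (A := fun j => A ⧸ I j) i).isOpen_preimage {0} (isOpen_discrete _)
    convert this using 1
    rfl
  exact h1.preimage continuous_subtype_val


lemma topRing : @IsTopologicalRing (limSubring A I hdesc) (limTopology A I hdesc) _ := by
  rw [topEq]; exact inferInstance

lemma separated (x : limSubring A I hdesc)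
    (hx : ∀ U ∈ @nhds _ (limTopology A I hdesc) 0, x ∈ U) : x = 0 := by
  apply Subtype.ext
  funext i
  exact (mem_K I hdesc).1 (hx _ (K_mem_nhds I hdesc i))

lemma complete (f : ℕ → limSubring A I hdesc)
    (hf : ∀ U ∈ @nhds _ (limTopology A I hdesc) 0, ∃ N, ∀ m ≥ N, ∀ n ≥ N, f m - f n ∈ U) :
    ∃ a, ∀ U ∈ @nhds _ (limTopology A I hdesc) 0, ∃ N, ∀ n ≥ N, a - f n ∈ U := by
  choose N hN using fun i => hf _ (K_mem_nhds I hdesc i)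
  set M : ℕ → ℕ := fun i => (Finset.range (i + 1)).sup N with hM
  have hMN : ∀ i, N i ≤ M i := fun i =>
    Finset.le_sup (Finset.mem_range.2 (Nat.lt_succ_self i))
  have hMmono : Monotone M := fun i j hij =>
    Finset.sup_mono (Finset.range_subset_range.2 (by omega))
  have hval : ∀ i, ∀ m ≥ N i, ∀ n ≥ N i,
      (f m : ∀ k, A ⧸ I k) i = (f n : ∀ k, A ⧸ I k) i := by
    intro i m hm n hn
    have := (mem_K I hdesc).1 (hN i m hm n hn)
    exact sub_eq_zero.1 this
  refine ⟨⟨fun i => (f (M i) : ∀ k, A ⧸ I k) i, ?_⟩, ?_⟩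
  · show ∀ i, _ = _
    intro i
    have h1 := (show ∀ j, Ideal.Quotient.factor (hdesc j) ((f (M (i + 1)) : ∀ k, A ⧸ I k) (j + 1)) =
      (f (M (i + 1)) : ∀ k, A ⧸ I k) j from (f (M (i + 1))).2) i
    rw [h1]
    exact hval i _ (le_trans (hMN i) (hMmono (Nat.le_succ i))) _ (hMN i)
  · intro U hU
    obtain ⟨i, hi⟩ := (mem_nhds_iff I hdesc U).1 hU
    refine ⟨M i, fun n hn => hi ?_⟩
    apply (mem_K I hdesc).2
    show (f (M i) : ∀ k, A ⧸ I k) i - (f n : ∀ k, A ⧸ I k) i = 0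
    rw [sub_eq_zero]
    exact hval i _ (hMN i) _ (le_trans (hMN i) hn)

lemma nilpotent_K0 (hrad : ∀ i, (I i).radical = (I 0).radical)
    (x : limSubring A I hdesc) (hx : x ∈ K I hdesc 0) :
    Filter.Tendsto (fun n => x ^ n) Filter.atTop (@nhds _ (limTopology A I hdesc) 0) := by
  rw [Filter.tendsto_atTop']
  intro U hU
  obtain ⟨i, hi⟩ := (mem_nhds_iff I hdesc U).1 hU
  obtain ⟨a, ha⟩ := Ideal.Quotient.mk_surjective ((x : ∀ k, A ⧸ I k) i)
  have h0 : (x : ∀ k, A ⧸ I k) 0 = Ideal.Quotient.mk (I 0) a :=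
    val_eq_mk I hdesc (Nat.zero_le i) ha.symm
  have haI0 : a ∈ I 0 := by
    rw [← Ideal.Quotient.eq_zero_iff_mem, ← h0]
    exact (mem_K I hdesc).1 hx
  have : a ∈ (I i).radical := by
    rw [hrad i]
    exact Ideal.le_radical haI0
  obtain ⟨n, hn⟩ := this
  refine ⟨n, fun m hm => hi ?_⟩
  apply (mem_K I hdesc).2
  show ((x : ∀ k, A ⧸ I k) i) ^ m = 0
  have hxn : ((x : ∀ k, A ⧸ I k) i) ^ n = 0 := by
    rw [← ha, ← map_pow, Ideal.Quotient.eq_zero_iff_mem]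
    exact hn
  calc ((x : ∀ k, A ⧸ I k) i) ^ m
      = ((x : ∀ k, A ⧸ I k) i) ^ n * ((x : ∀ k, A ⧸ I k) i) ^ (m - n) := by
        rw [← pow_add]; congr 1; omega
    _ = 0 := by rw [hxn, zero_mul]


lemma cont (A : Type*) [CommRing A] [TopologicalSpace A] (hA : IsTopologicalRing A)
    (I : ℕ → Ideal A) (hdesc : ∀ i, I (i + 1) ≤ I i)
    (hopen : ∀ i, IsOpen ((I i : Ideal A) : Set A)) :
    @Continuous A _ _ (limTopology A I hdesc)
      (RingHom.codRestrict (Pi.ringHom fun i => Ideal.Quotient.mk (I i)) _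
        (fun a i => Ideal.Quotient.factor_mk (hdesc i) a) : A →+* limSubring A I hdesc) := by
  haveI := hA
  letI := limTopology A I hdesc
  rw [topEq]
  apply continuous_induced_rng.2
  apply continuous_pi
  intro i
  show Continuous fun a : A => Ideal.Quotient.mk (I i) a
  rw [continuous_def]
  intro s _
  rw [isOpen_iff_mem_nhds]
  intro a ha
  rw [← map_add_left_nhds_zero a, Filter.mem_map]
  apply Filter.mem_of_superset ((hopen i).mem_nhds (I i).zero_mem)
  intro x hx
  show Ideal.Quotient.mk (I i) (a + x) ∈ s
  have : Ideal.Quotient.mk (I i) (a + x) = Ideal.Quotient.mk (I i) a := by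
    rw [map_add, Ideal.Quotient.eq_zero_iff_mem.2 hx, add_zero]
  rw [this]
  exact ha

end Stmt2Aux

/-- For an admissible ring `A` and a descending chain of open ideals `Iᵢ` all with the same
radical, `B = varprojlim A/Iᵢ` is admissible and `A → B` is continuous. -/
theorem stmt_2 (A : Type*) [CommRing A] [TopologicalSpace A] (hA : IsAdmissible A)
    (I : ℕ → Ideal A) (hdesc : ∀ i, I (i + 1) ≤ I i)
    (hopen : ∀ i, IsOpen ((I i : Ideal A) : Set A))
    (hrad : ∀ i, (I i).radical = (I 0).radical) :
    letI := limTopology A I hdesc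
    IsAdmissible (limSubring A I hdesc) ∧ Continuous (toLim A I hdesc) := by
  letI := limTopology A I hdesc
  haveI := hA.topRing
  open Stmt2Aux in
  exact ⟨⟨topRing I hdesc, ⟨K I hdesc, K_antitone I hdesc, mem_nhds_iff I hdesc⟩,
    separated I hdesc, complete I hdesc,
    ⟨K I hdesc 0, isOpen_K I hdesc 0, fun x hx => nilpotent_K0 I hdesc hrad x hx⟩⟩,
    cont A hA.topRing I hdesc hopen⟩
end

section
/- Let $A$ be a pro-Noetherian admissible ring and $I \subseteq A$ an ideal of definition. Then for any open neighborhood $V$ of $0$, there exists $n \in \mathbb{N}$ such that $I^n \subseteq V$. -/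
open Filter Topology

lemma sup_pow_le_aux {A : Type*} [CommRing A] (J K : Ideal A) (n : ℕ) :
    (J ⊔ K) ^ n ≤ J ⊔ K ^ n := by
  induction n with
  | zero => simp
  | succ n ih =>
    rw [pow_succ]
    calc (J ⊔ K) ^ n * (J ⊔ K) ≤ (J ⊔ K ^ n) * (J ⊔ K) := Ideal.mul_mono ih le_rfl
    _ ≤ J ⊔ K ^ (n + 1) := by
        rw [Ideal.sup_mul, Ideal.mul_sup, Ideal.mul_sup, pow_succ]
        refine sup_le (sup_le ?_ ?_) (sup_le ?_ le_sup_right)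
        · exact le_trans Ideal.mul_le_left le_sup_left
        · exact le_sup_of_le_left (Ideal.mul_le.mpr fun x hx y _ => J.mul_mem_right y hx)
        · exact le_sup_of_le_left (Ideal.mul_le.mpr fun x _ y hy => J.mul_mem_left x hy)

/-- In a pro-Noetherian admissible ring, every ideal of definition `I` satisfies: for every
neighborhood `V` of `0` there is `n` with `I ^ n ⊆ V`. -/
theorem stmt_3 (A : Type*) [CommRing A] [TopologicalSpace A] (hA : IsAdmissible A)
    (hpro : ∀ J : Ideal A, IsOpen (J : Set A) → IsNoetherianRing (A ⧸ J))
    (I : Ideal A) (hI : IsIdealOfDefinition A I)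
    (V : Set A) (hV : V ∈ nhds (0 : A)) :
    ∃ n : ℕ, ((I ^ n : Ideal A) : Set A) ⊆ V := by
  classical
  have := hA.topRing
  obtain ⟨Ic, hmono, hbasis⟩ := hA.exists_chain
  obtain ⟨i, hiV⟩ := (hbasis V).mp hV
  set J : Ideal A := Ic i with hJdef
  have hJnhds : (J : Set A) ∈ nhds (0 : A) := (hbasis J).mpr ⟨i, le_rfl⟩
  have hJopen : IsOpen (J : Set A) :=
    AddSubgroup.isOpen_of_mem_nhds J.toAddSubgroup hJnhds
  haveI hN : IsNoetherianRing (A ⧸ J) := hpro J hJopen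
  -- image of I in A/J is f.g.
  set f := Ideal.Quotient.mk J with hf
  have hfg : (I.map f).FG := IsNoetherian.noetherian _
  obtain ⟨S, hS⟩ := hfg
  -- lift generators into I
  have hsurj : Function.Surjective f := Ideal.Quotient.mk_surjective
  have hlift : ∀ s ∈ S, ∃ x : A, x ∈ I ∧ f x = s := by
    intro s hs
    have : s ∈ I.map f := by rw [← hS]; exact Ideal.subset_span hs
    obtain ⟨x, hx, hfx⟩ := (Ideal.mem_map_iff_of_surjective f hsurj).mp this
    exact ⟨x, hx, hfx⟩
  choose lift hliftI hliftf using hlift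
  set T : Finset A := S.attach.image (fun s => lift s.1 s.2) with hT
  set K : Ideal A := Ideal.span (T : Set A) with hK
  -- I ≤ J ⊔ K
  have hIJK : I ≤ J ⊔ K := by
    intro a ha
    have hmaps : I.map f = K.map f := by
      rw [← hS]
      apply le_antisymm
      · rw [Ideal.span_le]
        intro s hs
        have : lift s hs ∈ K := by
          apply Ideal.subset_span
          simp only [hT, Finset.coe_image, Set.mem_image]
          exact ⟨⟨s, hs⟩, by simp, rfl⟩
        have := Ideal.mem_map_of_mem f this
        rwa [hliftf s hs] at this
      · rw [Ideal.map_span, Ideal.span_le]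
        intro y hy
        simp only [hT, Finset.coe_image, Set.mem_image] at hy
        obtain ⟨z, ⟨⟨s, hs⟩, _, rfl⟩, rfl⟩ := hy
        rw [hliftf s hs]
        exact Ideal.subset_span hs
    have : f a ∈ K.map f := by
      rw [← hmaps]; exact Ideal.mem_map_of_mem f ha
    obtain ⟨b, hb, hfb⟩ := (Ideal.mem_map_iff_of_surjective f hsurj).mp this
    have hab : a - b ∈ J := by
      rw [← Ideal.Quotient.eq_zero_iff_mem, map_sub, hfb, sub_self]
    have : a = (a - b) + b := by ring
    rw [this]
    exact Submodule.add_mem _ (Ideal.mem_sup_left hab) (Ideal.mem_sup_right hb)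
  -- K ≤ J.radical
  have hKrad : K ≤ J.radical := by
    rw [hK, Ideal.span_le]
    intro x hx
    simp only [hT, Finset.coe_image, Set.mem_image] at hx
    obtain ⟨⟨s, hs⟩, _, rfl⟩ := hx
    have hxI : lift s hs ∈ I := hliftI s hs
    have htend := hI.2 _ hxI
    have := htend.eventually_mem hJnhds
    obtain ⟨n, hn⟩ := this.exists
    exact ⟨n, hn⟩
  obtain ⟨m, hm⟩ := Ideal.exists_pow_le_of_le_radical_of_fg hKrad
    ⟨T, by rw [hK]⟩
  refine ⟨m, ?_⟩
  have : I ^ m ≤ J := by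
    calc I ^ m ≤ (J ⊔ K) ^ m := Ideal.pow_right_mono hIJK m
    _ ≤ J ⊔ K ^ m := sup_pow_le_aux J K m
    _ ≤ J := sup_le le_rfl hm
  exact fun x hx => hiV (this hx)
end

section
/- Every pro-Noetherian adic ring is Noetherian. Moreover, for every ideal of definition $I$ in such a ring $A$, the topology on $A$ coincides with the $I$-adic topology. -/
open Filter Topology

open MvPolynomial

section Aux

variable {A : Type*} [CommRing A]

lemma myProdPow (J : Ideal A) {ι : Type*} (x : ι → A) (hx : ∀ i, x i ∈ J)
    (s : Finset ι) (m : ι → ℕ) : (∏ i ∈ s, x i ^ m i) ∈ J ^ (∑ i ∈ s, m i) := by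
  classical
  induction s using Finset.induction_on with
  | empty => simp [Ideal.one_eq_top]
  | insert _ _ h ih =>
    rename_i a s
    rw [Finset.prod_insert h, Finset.sum_insert h, pow_add]
    exact Ideal.mul_mem_mul (Ideal.pow_mem_pow (hx _) _) ih

lemma myEvalMem {ι : Type*} (J C : Ideal A) (x : ι → A) (hx : ∀ i, x i ∈ J)
    {p : MvPolynomial ι A} {n : ℕ} (hp : p.IsHomogeneous n)
    (hc : ∀ m, coeff m p ∈ C) : eval x p ∈ C * J ^ n := by
  rw [eval_eq]
  refine Ideal.sum_mem _ fun d hd => ?_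
  have hdeg : d.degree = n := by
    by_contra h
    exact (MvPolynomial.mem_support_iff.mp hd) (hp.coeff_eq_zero h)
  have hprod : (∏ i ∈ d.support, x i ^ d i) ∈ J ^ n := by
    rw [← hdeg]
    exact myProdPow J x hx d.support d
  exact Ideal.mul_mem_mul (hc d) hprod

lemma myEvalSurj {ι : Type*} [Fintype ι] (x : ι → A) (n : ℕ) {a : A}
    (ha : a ∈ (Ideal.span (Set.range x)) ^ n) :
    ∃ p : MvPolynomial ι A, p.IsHomogeneous n ∧ eval x p = a := by
  induction n generalizing a with
  | zero => exact ⟨C a, isHomogeneous_C _ _, eval_C _⟩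
  | succ n ih =>
    rw [pow_succ] at ha
    refine Submodule.mul_induction_on ha ?_ ?_
    · intro b hb c hc
      obtain ⟨p, hp, hpe⟩ := ih hb
      obtain ⟨g, hg⟩ := (Submodule.mem_span_range_iff_exists_fun A).mp hc
      refine ⟨p * ∑ i, MvPolynomial.C (g i) * X i, hp.mul ?_, ?_⟩
      · exact IsHomogeneous.sum _ _ _ fun i _ => isHomogeneous_C_mul_X _ _
      · rw [map_mul, hpe, map_sum]
        simp only [map_mul, eval_C, eval_X]
        rw [← hg]
        simp [smul_eq_mul]
    · rintro y z ⟨p, hp, rfl⟩ ⟨q, hq, rfl⟩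
      exact ⟨p + q, hp.add hq, by rw [map_add]⟩

lemma myHCmul {ι : Type*} {p c : MvPolynomial ι A} {d : ℕ}
    (hp : p.IsHomogeneous d) (n : ℕ) :
    homogeneousComponent n (c * p) =
      if d ≤ n then homogeneousComponent (n - d) c * p else 0 := by
  classical
  have hrw : c * p = ∑ i ∈ Finset.range (c.totalDegree + 1), homogeneousComponent i c * p := by
    rw [← Finset.sum_mul, sum_homogeneousComponent]
  rw [hrw, map_sum]
  have heach : ∀ i : ℕ, homogeneousComponent n (homogeneousComponent i c * p) =
      if n = i + d then homogeneousComponent i c * p else 0 := fun i =>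
    homogeneousComponent_of_mem ((mem_homogeneousSubmodule _ _).mpr
      ((homogeneousComponent_isHomogeneous i c).mul hp))
  simp_rw [heach]
  by_cases h : d ≤ n
  · rw [if_pos h]
    have hcong : ∀ i : ℕ, (if n = i + d then homogeneousComponent i c * p else 0) =
        if i = n - d then homogeneousComponent i c * p else 0 := fun i =>
      if_congr (by omega) rfl rfl
    simp_rw [hcong]
    rw [Finset.sum_ite_eq' (Finset.range (c.totalDegree + 1)) (n - d)
      (fun i => homogeneousComponent i c * p)]
    split_ifs with h3
    · rfl
    · rw [homogeneousComponent_eq_zero _ c (by simp at h3; omega), zero_mul]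
  · rw [if_neg h]
    exact Finset.sum_eq_zero fun i _ => if_neg (by omega)

lemma myHCmap {ι : Type*} {B : Type*} [CommRing B] (f : A →+* B) (n : ℕ)
    (p : MvPolynomial ι A) :
    MvPolynomial.map f (homogeneousComponent n p) =
      homogeneousComponent n (MvPolynomial.map f p) := by
  ext m
  rw [coeff_map, coeff_homogeneousComponent, coeff_homogeneousComponent, coeff_map,
    apply_ite f, map_zero]

end Aux

section Aux2

variable {A : Type*} [CommRing A]

lemma myFinsetSpan {R M : Type*} [Ring R] [AddCommGroup M] [Module R M] {S : Set M}
    (h : (Submodule.span R S).FG) :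
    ∃ T : Finset M, ↑T ⊆ S ∧ Submodule.span R (↑T : Set M) = Submodule.span R S := by
  classical
  obtain ⟨G, hG⟩ := h
  have hmem : ∀ g ∈ G, ∃ t : Finset M, ↑t ⊆ S ∧ g ∈ Submodule.span R (↑t : Set M) := by
    intro g hg
    have : g ∈ Submodule.span R S := hG ▸ Submodule.subset_span hg
    exact Submodule.mem_span_finite_of_mem_span this
  choose t ht1 ht2 using hmem
  refine ⟨G.attach.biUnion (fun g => t g.1 g.2), ?_, ?_⟩
  · intro m hm
    simp only [Finset.coe_biUnion, Set.mem_iUnion, Finset.mem_coe] at hm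
    obtain ⟨g, hg, hmg⟩ := hm
    exact ht1 g.1 g.2 hmg
  · refine le_antisymm (Submodule.span_le.mpr ?_) ?_
    · intro m hm
      simp only [Finset.coe_biUnion, Set.mem_iUnion, Finset.mem_coe] at hm
      obtain ⟨g, hg, hmg⟩ := hm
      exact Submodule.subset_span (ht1 g.1 g.2 hmg)
    · rw [← hG]
      refine Submodule.span_le.mpr fun g hg => ?_
      refine Submodule.span_mono ?_ (ht2 g hg)
      intro m hm
      simp only [Finset.coe_biUnion, Set.mem_iUnion, Finset.mem_coe]
      exact ⟨⟨g, hg⟩, G.mem_attach _, hm⟩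

lemma myMulSpan {ι : Type*} [Fintype ι] (x : ι → A) (N : Ideal A) {b : A}
    (hb : b ∈ Ideal.span (Set.range x) * N) :
    ∃ g : ι → A, (∀ i, g i ∈ N) ∧ ∑ i, g i * x i = b := by
  refine Submodule.mul_induction_on hb ?_ ?_
  · intro m hm c hc
    obtain ⟨u, hu⟩ := (Submodule.mem_span_range_iff_exists_fun A).mp hm
    refine ⟨fun i => u i * c, fun i => Ideal.mul_mem_left _ _ hc, ?_⟩
    rw [← hu, Finset.sum_mul]
    exact Finset.sum_congr rfl fun i _ => by rw [smul_eq_mul]; ring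
  · rintro y z ⟨g, hg, rfl⟩ ⟨g', hg', rfl⟩
    exact ⟨g + g', fun i => add_mem (hg i) (hg' i),
      by simp [add_mul, Finset.sum_add_distrib]⟩

lemma myDescent (J : Ideal A)
    (hsep : ∀ x : A, (∀ n, x ∈ J ^ n) → x = 0)
    (hcomp : ∀ f : ℕ → A, (∀ k : ℕ, ∃ N, ∀ m ≥ N, ∀ n ≥ N, f m - f n ∈ J ^ k) →
      ∃ a, ∀ k : ℕ, ∃ N, ∀ n ≥ N, a - f n ∈ J ^ k)
    (K : Ideal A) {ι : Type*} [Fintype ι] (f : ι → A) (d : ι → ℕ)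
    (hfK : ∀ i, f i ∈ K)
    (hstep : ∀ n : ℕ, ∀ a ∈ K, a ∈ J ^ n →
      ∃ g : ι → A, (∀ i, g i ∈ J ^ (n - d i)) ∧ a - ∑ i, g i * f i ∈ J ^ (n + 1)) :
    K = Ideal.span (Set.range f) := by
  classical
  refine le_antisymm ?_ (Ideal.span_le.mpr (by rintro _ ⟨i, rfl⟩; exact hfK i))
  intro a ha
  let g' : ℕ → A → ι → A := fun n b =>
    if h : b ∈ K ∧ b ∈ J ^ n then (hstep n b h.1 h.2).choose else 0
  let X : ℕ → A := fun n => Nat.rec a (fun n b => b - ∑ i, g' n b i * f i) n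
  have hXsucc : ∀ n, X (n + 1) = X n - ∑ i, g' n (X n) i * f i := fun n => rfl
  have hinv : ∀ n, X n ∈ K ∧ X n ∈ J ^ n := by
    intro n
    induction n with
    | zero => exact ⟨ha, by simp⟩
    | succ n ih =>
      have hg : g' n (X n) = (hstep n (X n) ih.1 ih.2).choose := dif_pos ⟨ih.1, ih.2⟩
      constructor
      · rw [hXsucc]
        exact sub_mem ih.1 (Ideal.sum_mem _ fun i _ => Ideal.mul_mem_left _ _ (hfK i))
      · rw [hXsucc, hg]
        exact (hstep n (X n) ih.1 ih.2).choose_spec.2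
  have hgmem : ∀ n i, g' n (X n) i ∈ J ^ (n - d i) := by
    intro n i
    have hg : g' n (X n) = (hstep n (X n) (hinv n).1 (hinv n).2).choose :=
      dif_pos ⟨(hinv n).1, (hinv n).2⟩
    rw [hg]
    exact (hstep n (X n) (hinv n).1 (hinv n).2).choose_spec.1 i
  let S : ι → ℕ → A := fun i N => ∑ n ∈ Finset.range N, g' n (X n) i
  have hXN : ∀ N, a - ∑ i, S i N * f i = X N := by
    intro N
    induction N with
    | zero =>
      show a - ∑ i, (∑ n ∈ Finset.range 0, g' n (X n) i) * f i = a
      simp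
    | succ N ih =>
      have : ∀ i, S i (N + 1) = S i N + g' N (X N) i := fun i => Finset.sum_range_succ _ _
      simp_rw [this, add_mul, Finset.sum_add_distrib]
      rw [hXsucc, ← ih]
      ring
  have hcauchy : ∀ i, ∀ k : ℕ, ∃ N, ∀ m ≥ N, ∀ n ≥ N, S i m - S i n ∈ J ^ k := by
    intro i k
    refine ⟨k + d i, fun m hm n hn => ?_⟩
    have key : ∀ u v : ℕ, k + d i ≤ u → u ≤ v → S i v - S i u ∈ J ^ k := by
      intro u v hu huv
      rw [← Finset.sum_Ico_eq_sub _ huv]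
      refine Ideal.sum_mem _ fun j hj => ?_
      have hj' := Finset.mem_Ico.mp hj
      exact Ideal.pow_le_pow_right (by omega) (hgmem j i)
    rcases le_total n m with h | h
    · exact key n m hn h
    · have := key m n hm h
      simpa using neg_mem this
  choose L hL using fun i => hcomp (S i) (hcauchy i)
  have hfinal : ∀ k : ℕ, a - ∑ i, L i * f i ∈ J ^ k := by
    intro k
    choose Ni hNi using fun i => hL i k
    set N : ℕ := max k (Finset.univ.sup Ni) with hN
    have h1 : a - ∑ i, L i * f i = X N + ∑ i, (S i N - L i) * f i := by
      rw [← hXN N]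
      simp_rw [sub_mul]
      rw [Finset.sum_sub_distrib]
      ring
    rw [h1]
    refine add_mem (Ideal.pow_le_pow_right (le_max_left _ _) (hinv N).2)
      (Ideal.sum_mem _ fun i _ => Ideal.mul_mem_right _ _ ?_)
    have : L i - S i N ∈ J ^ k :=
      hNi i N (le_trans (Finset.le_sup (Finset.mem_univ i)) (le_max_right _ _))
    simpa using neg_mem this
  have := hsep _ (fun k => hfinal k)
  have ha' : a = ∑ i, L i * f i := sub_eq_zero.mp this
  rw [ha']
  exact Ideal.sum_mem _ fun i _ =>
    Ideal.mul_mem_left _ _ (Ideal.subset_span ⟨i, rfl⟩)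

end Aux2

section Key
open MvPolynomial

variable {A : Type*} [CommRing A]

lemma myKeyFG (J : Ideal A)
    (hsep : ∀ x : A, (∀ n, x ∈ J ^ n) → x = 0)
    (hcomp : ∀ f : ℕ → A, (∀ k : ℕ, ∃ N, ∀ m ≥ N, ∀ n ≥ N, f m - f n ∈ J ^ k) →
      ∃ a, ∀ k : ℕ, ∃ N, ∀ n ≥ N, a - f n ∈ J ^ k)
    {ι : Type*} [Fintype ι] (x : ι → A) (hxJ : Ideal.span (Set.range x) = J)
    (hNoeth : IsNoetherianRing (A ⧸ J)) (K : Ideal A) : K.FG := by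
  classical
  haveI := hNoeth
  set π : A →+* A ⧸ J := Ideal.Quotient.mk J with hπ
  set Φ : MvPolynomial ι A →+* MvPolynomial ι (A ⧸ J) := MvPolynomial.map π with hΦ
  have hΦsurj : Function.Surjective Φ :=
    MvPolynomial.map_surjective π Ideal.Quotient.mk_surjective
  set SK : Set (MvPolynomial ι (A ⧸ J)) :=
    {p | ∃ (n : ℕ) (q : MvPolynomial ι A) (b : A),
      p.IsHomogeneous n ∧ q.IsHomogeneous n ∧ Φ q = p ∧ b ∈ K ∧
        MvPolynomial.eval x q - b ∈ J ^ (n + 1)} with hSK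
  haveI : IsNoetherianRing (MvPolynomial ι (A ⧸ J)) := inferInstance
  obtain ⟨T, hTS, hTspan⟩ := myFinsetSpan (R := MvPolynomial ι (A ⧸ J))
    (S := SK) (IsNoetherian.noetherian _)
  have hdata : ∀ p : {p // p ∈ T}, ∃ (n : ℕ) (q : MvPolynomial ι A) (b : A),
      (p : MvPolynomial ι (A ⧸ J)).IsHomogeneous n ∧ q.IsHomogeneous n ∧ Φ q = p ∧ b ∈ K ∧
        MvPolynomial.eval x q - b ∈ J ^ (n + 1) := fun p => hTS p.2
  choose dg qf bf hhom1 hhom2 hmap hbK hbJ using hdata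
  have hxmem : ∀ i, x i ∈ J := fun i => hxJ ▸ Ideal.subset_span ⟨i, rfl⟩
  have hevq : ∀ p : {p // p ∈ T}, MvPolynomial.eval x (qf p) ∈ J ^ (dg p) := by
    intro p
    have := myEvalMem J ⊤ x hxmem (hhom2 p) (fun m => Submodule.mem_top)
    rwa [← Ideal.one_eq_top, one_mul] at this
  have hstep : ∀ n : ℕ, ∀ a ∈ K, a ∈ J ^ n →
      ∃ g : {p // p ∈ T} → A, (∀ p, g p ∈ J ^ (n - dg p)) ∧
        a - ∑ p, g p * bf p ∈ J ^ (n + 1) := by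
    intro n a haK haJ
    obtain ⟨qa, hqa, hqae⟩ := myEvalSurj x n (by rwa [hxJ])
    have hqS : Φ qa ∈ SK := ⟨n, qa, a, hqa.map π, hqa, rfl, haK, by rw [hqae]; simp⟩
    have hmemT : Φ qa ∈ Submodule.span (MvPolynomial ι (A ⧸ J)) (↑T : Set (MvPolynomial ι (A ⧸ J))) := by
      rw [hTspan]; exact Submodule.subset_span hqS
    obtain ⟨c, -, hc⟩ := Submodule.mem_span_finset.mp hmemT
    have hc' : ∑ p : {p // p ∈ T}, c p.1 * p.1 = Φ qa := by
      simp only [smul_eq_mul] at hc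
      rw [← hc, Finset.univ_eq_attach]
      exact Finset.sum_attach T (fun p => c p * p)
    -- take homogeneous component n
    have hqhc : homogeneousComponent n (Φ qa) = Φ qa :=
      (homogeneousComponent_of_mem ((mem_homogeneousSubmodule _ _).mpr (hqa.map π))).trans
        (if_pos rfl)
    have hdecomp : Φ qa = ∑ p : {p // p ∈ T},
        if dg p ≤ n then homogeneousComponent (n - dg p) (c p.1) * p.1 else 0 := by
      rw [← hqhc, ← hc', map_sum]
      exact Finset.sum_congr rfl fun p _ => myHCmul (hhom1 p) n
    -- lifts
    choose Lc hLc using fun p : {p // p ∈ T} => hΦsurj (c p.1)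
    set Cc : {p // p ∈ T} → MvPolynomial ι A :=
      fun p => homogeneousComponent (n - dg p) (Lc p) with hCc
    have hΦCc : ∀ p, Φ (Cc p) = homogeneousComponent (n - dg p) (c p.1) := by
      intro p
      rw [hCc]
      simp only []
      rw [myHCmap π, hLc]
    set Tn : Finset {p // p ∈ T} := Finset.univ.filter (fun p => dg p ≤ n) with hTn
    set D : MvPolynomial ι A := qa - ∑ p ∈ Tn, Cc p * qf p with hD
    have hDhom : D.IsHomogeneous n := by
      rw [← mem_homogeneousSubmodule]
      refine sub_mem ((mem_homogeneousSubmodule _ _).mpr hqa) (Submodule.sum_mem _ ?_)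
      intro p hp
      have hple : dg p ≤ n := (Finset.mem_filter.mp hp).2
      have : (Cc p * qf p).IsHomogeneous ((n - dg p) + dg p) :=
        (homogeneousComponent_isHomogeneous _ _).mul (hhom2 p)
      rw [Nat.sub_add_cancel hple] at this
      exact (mem_homogeneousSubmodule _ _).mpr this
    have hΦD : Φ D = 0 := by
      rw [hD, map_sub, map_sum]
      simp_rw [map_mul, hΦCc, hmap]
      rw [sub_eq_zero]
      rw [hdecomp]
      rw [Finset.sum_filter]
    have hDcoeff : ∀ m, MvPolynomial.coeff m D ∈ J := by
      intro m
      have hΦD' : MvPolynomial.map π D = 0 := hΦD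
      have : π (MvPolynomial.coeff m D) = 0 := by
        rw [← MvPolynomial.coeff_map, hΦD', MvPolynomial.coeff_zero]
      exact Ideal.Quotient.eq_zero_iff_mem.mp this
    have hevD : MvPolynomial.eval x D ∈ J ^ (n + 1) := by
      have := myEvalMem J J x hxmem hDhom hDcoeff
      rwa [← pow_succ'] at this
    set g0 : {p // p ∈ T} → A := fun p => if dg p ≤ n then MvPolynomial.eval x (Cc p) else 0
      with hg0
    have hg0p : ∀ p, g0 p = if dg p ≤ n then MvPolynomial.eval x (Cc p) else 0 := fun p => rfl
    refine ⟨g0, ?_, ?_⟩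
    · intro p
      rw [hg0p p]
      by_cases h : dg p ≤ n
      · rw [if_pos h]
        have := myEvalMem J ⊤ x hxmem (homogeneousComponent_isHomogeneous (n - dg p) (Lc p))
          (fun m => Submodule.mem_top)
        rwa [← Ideal.one_eq_top, one_mul] at this
      · rw [if_neg h]
        exact Submodule.zero_mem _
    · have hsum : ∑ p : {p // p ∈ T}, g0 p * bf p
          = ∑ p ∈ Tn, MvPolynomial.eval x (Cc p) * bf p := by
        simp only [hg0p]
        rw [hTn, Finset.sum_filter]
        exact Finset.sum_congr rfl fun p _ => by split_ifs <;> simp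
      rw [hsum]
      have hevDeq : MvPolynomial.eval x D =
          a - ∑ p ∈ Tn, MvPolynomial.eval x (Cc p) * MvPolynomial.eval x (qf p) := by
        rw [hD, map_sub, map_sum, hqae]
        simp_rw [map_mul]
      have hiden : a - ∑ p ∈ Tn, MvPolynomial.eval x (Cc p) * bf p =
          MvPolynomial.eval x D +
            ∑ p ∈ Tn, MvPolynomial.eval x (Cc p) * (MvPolynomial.eval x (qf p) - bf p) := by
        rw [hevDeq]
        simp_rw [mul_sub]
        rw [Finset.sum_sub_distrib]
        ring
      rw [hiden]
      refine add_mem hevD (Ideal.sum_mem _ fun p hp => ?_)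
      have hple : dg p ≤ n := (Finset.mem_filter.mp hp).2
      have h1 : MvPolynomial.eval x (Cc p) ∈ J ^ (n - dg p) := by
        have := myEvalMem J ⊤ x hxmem (homogeneousComponent_isHomogeneous (n - dg p) (Lc p))
          (fun m => Submodule.mem_top)
        rwa [← Ideal.one_eq_top, one_mul] at this
      have h2 := hbJ p
      have : MvPolynomial.eval x (Cc p) * (MvPolynomial.eval x (qf p) - bf p)
          ∈ J ^ (n - dg p) * J ^ (dg p + 1) := Ideal.mul_mem_mul h1 h2
      rwa [← pow_add, show n - dg p + (dg p + 1) = n + 1 by omega] at this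
  have hfb : ∀ p : {p // p ∈ T}, bf p ∈ K := hbK
  have hK := myDescent J hsep hcomp K bf dg hfb hstep
  rw [hK]
  exact Submodule.fg_span (Set.finite_range bf)

end Key

/-- Every pro-Noetherian adic ring is Noetherian; moreover its topology is the `I`-adic
topology for every ideal of definition `I`. -/
theorem stmt_4 (A : Type*) [CommRing A] [TopologicalSpace A] (hA : IsAdmissible A)
    (hpro : ∀ J : Ideal A, IsOpen (J : Set A) → IsNoetherianRing (A ⧸ J))
    (hadic : ∃ J : Ideal A, IsAdicTopology A J) :
    IsNoetherianRing A ∧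
      ∀ I : Ideal A, IsIdealOfDefinition A I → IsAdicTopology A I := by
  classical
  haveI := hA.topRing
  obtain ⟨J, hJ⟩ := hadic
  have hJn : ∀ n : ℕ, ((J ^ n : Ideal A) : Set A) ∈ nhds (0 : A) := fun n =>
    (hJ _).mpr ⟨n, subset_rfl⟩
  have hopen : ∀ K : Ideal A, (K : Set A) ∈ nhds (0 : A) → IsOpen (K : Set A) := by
    intro K hK
    rw [isOpen_iff_mem_nhds]
    intro a ha
    rw [← map_add_left_nhds_zero a]
    exact Filter.mem_map.mpr (Filter.mem_of_superset hK (fun b hb => K.add_mem ha hb))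
  have hsep : ∀ x : A, (∀ n, x ∈ J ^ n) → x = 0 := fun x hx =>
    hA.separated x fun U hU => by
      obtain ⟨k, hk⟩ := (hJ U).mp hU
      exact hk (hx k)
  have hcomp : ∀ f : ℕ → A, (∀ k : ℕ, ∃ N, ∀ m ≥ N, ∀ n ≥ N, f m - f n ∈ J ^ k) →
      ∃ a, ∀ k : ℕ, ∃ N, ∀ n ≥ N, a - f n ∈ J ^ k := by
    intro f hf
    obtain ⟨a, ha⟩ := hA.complete f (fun U hU => by
      obtain ⟨k, hk⟩ := (hJ U).mp hU
      obtain ⟨N, hN⟩ := hf k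
      exact ⟨N, fun m hm n hn => hk (hN m hm n hn)⟩)
    exact ⟨a, fun k => ha _ (hJn k)⟩
  -- J is finitely generated
  haveI h2 : IsNoetherianRing (A ⧸ (J ^ 2)) := hpro _ (hopen _ (hJn 2))
  have hmapfg : (J.map (Ideal.Quotient.mk (J ^ 2))).FG :=
    (isNoetherianRing_iff_ideal_fg _).mp h2 _
  have hmapspan : J.map (Ideal.Quotient.mk (J ^ 2)) =
      Submodule.span _ ((Ideal.Quotient.mk (J ^ 2)) '' J) := rfl
  obtain ⟨T, hTsub, hTspan⟩ := myFinsetSpan (hmapspan ▸ hmapfg)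
  have hlift : ∀ t : {t // t ∈ T}, ∃ a : A, a ∈ J ∧ Ideal.Quotient.mk (J ^ 2) a = t :=
    fun t => by
      obtain ⟨a, ha, hat⟩ := hTsub t.2
      exact ⟨a, ha, hat⟩
  choose xg hxgJ hxgmk using hlift
  have hJle : J ≤ Ideal.span (Set.range xg) ⊔ J ^ 2 := by
    intro a ha
    have hTeq : (↑T : Set (A ⧸ J ^ 2)) = (Ideal.Quotient.mk (J ^ 2)) '' (Set.range xg) := by
      ext t
      constructor
      · intro ht
        exact ⟨xg ⟨t, ht⟩, ⟨⟨t, ht⟩, rfl⟩, hxgmk ⟨t, ht⟩⟩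
      · rintro ⟨-, ⟨i, rfl⟩, rfl⟩
        rw [hxgmk i]
        exact i.2
    have h1 : Ideal.Quotient.mk (J ^ 2) a ∈ J.map (Ideal.Quotient.mk (J ^ 2)) :=
      Ideal.mem_map_of_mem _ ha
    rw [hmapspan, ← hTspan, hTeq] at h1
    have h2' : Ideal.Quotient.mk (J ^ 2) a ∈ Ideal.map (Ideal.Quotient.mk (J ^ 2))
        (Ideal.span (Set.range xg)) := by
      rwa [Ideal.map_span]
    have h3 : a ∈ Ideal.comap (Ideal.Quotient.mk (J ^ 2))
        (Ideal.map (Ideal.Quotient.mk (J ^ 2)) (Ideal.span (Set.range xg))) := h2'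
    rw [Ideal.comap_map_of_surjective _ Ideal.Quotient.mk_surjective] at h3
    have hker : Ideal.comap (Ideal.Quotient.mk (J ^ 2)) ⊥ = J ^ 2 := by
      rw [← RingHom.ker_eq_comap_bot, Ideal.mk_ker]
    rwa [hker] at h3
  have hstepJ : ∀ n : ℕ, ∀ a ∈ J, a ∈ J ^ n →
      ∃ g : {t // t ∈ T} → A, (∀ i, g i ∈ J ^ (n - 1)) ∧
        a - ∑ i, g i * xg i ∈ J ^ (n + 1) := by
    intro n a haJ haJn
    cases n with
    | zero =>
      refine ⟨0, fun i => by simp, ?_⟩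
      simpa [pow_one] using haJ
    | succ m =>
      have hle : J ^ (m + 1) ≤ Ideal.span (Set.range xg) * J ^ m ⊔ J ^ (m + 2) := by
        calc J ^ (m + 1) = J ^ m * J := pow_succ J m
        _ ≤ J ^ m * (Ideal.span (Set.range xg) ⊔ J ^ 2) := Ideal.mul_mono_right hJle
        _ = J ^ m * Ideal.span (Set.range xg) ⊔ J ^ m * J ^ 2 := Ideal.mul_sup _ _ _
        _ = Ideal.span (Set.range xg) * J ^ m ⊔ J ^ (m + 2) := by
            rw [mul_comm, ← pow_add]
      obtain ⟨b, hb, e, he, hbe⟩ := Submodule.mem_sup.mp (hle haJn)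
      obtain ⟨g, hg, hgb⟩ := myMulSpan xg (J ^ m) hb
      refine ⟨g, fun i => by simpa using hg i, ?_⟩
      rw [← hbe, hgb]
      simpa using he
  have hJspan : J = Ideal.span (Set.range xg) :=
    myDescent J hsep hcomp J xg (fun _ => 1) hxgJ hstepJ
  haveI hNoethQ : IsNoetherianRing (A ⧸ J) := by
    refine hpro J (hopen J ?_)
    have := hJn 1
    rwa [pow_one] at this
  have hfg : ∀ K : Ideal A, K.FG := fun K =>
    myKeyFG J hsep hcomp xg hJspan.symm hNoethQ K
  have hNoethA : IsNoetherianRing A := (isNoetherianRing_iff_ideal_fg A).mpr hfg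
  refine ⟨hNoethA, ?_⟩
  intro I hI
  intro s
  constructor
  · intro hs
    obtain ⟨k, hk⟩ := (hJ s).mp hs
    obtain ⟨TI, hTIspan⟩ := hfg I
    set y : {t // t ∈ TI} → A := fun t => (t : A) with hy
    have hrange : Set.range y = (↑TI : Set A) := Subtype.range_coe
    have hyI : ∀ i, y i ∈ I := fun i => hTIspan ▸ Ideal.subset_span i.2
    have htend : ∀ i : {t // t ∈ TI}, ∃ N, ∀ n ≥ N, y i ^ n ∈ J ^ k := by
      intro i
      have := (hI.2 (y i) (hyI i)) (hJn k)
      rw [Filter.mem_map] at this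
      obtain ⟨N, hN⟩ := Filter.eventually_atTop.mp this
      exact ⟨N, hN⟩
    choose Ny hNy using htend
    set N0 : ℕ := (Finset.univ.sup Ny) + 1 with hN0
    set M : ℕ := Fintype.card {t // t ∈ TI} * N0 + 1 with hM
    refine ⟨M, fun a ha => hk ?_⟩
    show a ∈ (J ^ k : Ideal A)
    have haI : a ∈ (Ideal.span (Set.range y)) ^ M := by
      rw [hrange, hTIspan]
      exact ha
    obtain ⟨p, hp, hpe⟩ := myEvalSurj y M haI
    rw [← hpe, MvPolynomial.eval_eq]
    refine Ideal.sum_mem _ fun m hm => ?_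
    have hdeg : m.degree = M := by
      by_contra h
      exact (MvPolynomial.mem_support_iff.mp hm) (hp.coeff_eq_zero h)
    have hex : ∃ j, N0 ≤ m j := by
      by_contra h
      push_neg at h
      have hb : ∑ i ∈ m.support, m i ≤ m.support.card * N0 := by
        calc ∑ i ∈ m.support, m i ≤ ∑ i ∈ m.support, N0 :=
              Finset.sum_le_sum fun i _ => (h i).le
        _ = m.support.card * N0 := by rw [Finset.sum_const, smul_eq_mul]
      have hcard : m.support.card ≤ Fintype.card {t // t ∈ TI} := Finset.card_le_univ _
      have : m.degree ≤ Fintype.card {t // t ∈ TI} * N0 :=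
        le_trans hb (Nat.mul_le_mul_right _ hcard)
      omega
    obtain ⟨j, hj⟩ := hex
    have hjsupp : j ∈ m.support := Finsupp.mem_support_iff.mpr (by omega)
    have hprod : (∏ i ∈ m.support, y i ^ m i) ∈ J ^ k := by
      rw [← Finset.mul_prod_erase _ _ hjsupp]
      refine Ideal.mul_mem_right _ _ ?_
      exact hNy j (m j) (le_trans (Nat.le_of_lt (Nat.lt_succ_of_le
        (Finset.le_sup (Finset.mem_univ j)))) hj)
    exact Ideal.mul_mem_left _ _ hprod
  · rintro ⟨n, hn⟩
    have hIopen : (I : Set A) ∈ nhds (0 : A) := hI.1.mem_nhds I.zero_mem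
    obtain ⟨m, hm⟩ := (hJ _).mp hIopen
    have hJmI : (J ^ m : Ideal A) ≤ I := hm
    have hle : (J ^ (m * n) : Ideal A) ≤ I ^ n := by
      rw [pow_mul]
      exact Ideal.pow_right_mono hJmI n
    exact (hJ s).mpr ⟨m * n, subset_trans hle hn⟩
end

section
/- Let $k$ be a field. For any nonzero ideal $I$ of $k[x^{\pm}][[t]]$, the intersection $I \cap k[x][[t]]$ is nonzero. -/
open LaurentPolynomial Polynomial


/-- Clearing lemma: for `a ≠ 0` and any `c` in `k[x^±]`, there is `h` with
`a*h + c` a genuine polynomial. -/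
lemma key {k : Type*} [Field k] (a : LaurentPolynomial k) (ha : a ≠ 0)
    (c : LaurentPolynomial k) :
    ∃ h : LaurentPolynomial k, ∃ w : Polynomial k, a * h + c = Polynomial.toLaurent w := by
  obtain ⟨m, p, hp⟩ := a.exists_T_pow
  obtain ⟨r, d, hd⟩ := c.exists_T_pow
  have hp0 : p ≠ 0 := by
    intro h
    rw [h, map_zero] at hp
    exact ha ((isUnit_T (m : ℤ)).mul_right_cancel (a := a) (b := T (m : ℤ)) (c := 0) (by simp [← hp]))
  obtain ⟨p', hp', hXp'⟩ := p.exists_eq_pow_rootMultiplicity_mul_and_not_dvd hp0 0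
  rw [map_zero, sub_zero] at hp' hXp'
  set s := p.rootMultiplicity 0 with hs
  have h0 : p'.coeff 0 ≠ 0 := by rwa [Polynomial.X_dvd_iff] at hXp'
  -- power series inverse
  set P' : PowerSeries k := (p' : PowerSeries k) with hP'
  have hc0 : PowerSeries.constantCoeff P' ≠ 0 := by rwa [Polynomial.constantCoeff_coe]
  set Q : PowerSeries k := P'⁻¹ * (-(d : PowerSeries k)) with hQ
  set q : Polynomial k := Q.trunc r with hq
  have hdvd : (X : Polynomial k) ^ r ∣ p' * q + d := by
    rw [Polynomial.X_pow_dvd_iff]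
    intro i hi
    have e1 : (p' * q).coeff i = PowerSeries.coeff i (P' * Q) := by
      rw [Polynomial.coeff_mul, PowerSeries.coeff_mul]
      refine Finset.sum_congr rfl fun x hx => ?_
      have hx2 : x.2 < r := lt_of_le_of_lt (Finset.HasAntidiagonal.antidiagonal.snd_le hx) hi
      rw [hq, PowerSeries.coeff_trunc, if_pos hx2, hP', Polynomial.coeff_coe]
    have e2 : P' * Q = -(d : PowerSeries k) := by
      rw [hQ, ← mul_assoc, PowerSeries.mul_inv_cancel P' hc0, one_mul]
    simp [Polynomial.coeff_add, e1, e2, Polynomial.coeff_coe]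
  obtain ⟨w, hw⟩ := hdvd
  refine ⟨T ((m : ℤ) - (r + s)) * Polynomial.toLaurent q, w, ?_⟩
  have hTc : (IsUnit (T ((r : ℤ) + s) : LaurentPolynomial k)) := isUnit_T _
  apply hTc.mul_left_cancel
  have hT : (T (m : ℤ) : LaurentPolynomial k) = T ((m : ℤ) - (r + s)) * T ((r : ℤ) + s) := by
    rw [← T_add, show ((m : ℤ) - (r + s) + ((r : ℤ) + s)) = (m : ℤ) by ring]
  have key1 : a * (T ((m : ℤ) - (r + s)) * Polynomial.toLaurent q) * T ((r : ℤ) + s)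
      = Polynomial.toLaurent (p * q) := by
    rw [map_mul, hp, hT]; ring
  have key2 : c * T ((r : ℤ) + s) = Polynomial.toLaurent (X ^ s * d) := by
    rw [map_mul, toLaurent_X_pow, hd, T_add]
    ring
  have key3 : p * q + X ^ s * d = X ^ (s + r) * w := by
    rw [hp', show X ^ s * p' * q + X ^ s * d = X ^ s * (p' * q + d) by ring, hw, pow_add, mul_assoc]
  calc T ((r : ℤ) + s) * (a * (T ((m : ℤ) - (r + s)) * Polynomial.toLaurent q) + c)
      = a * (T ((m : ℤ) - (r + s)) * Polynomial.toLaurent q) * T ((r : ℤ) + s)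
        + c * T ((r : ℤ) + s) := by ring
    _ = Polynomial.toLaurent (p * q + X ^ s * d) := by rw [key1, key2, map_add]
    _ = Polynomial.toLaurent (X ^ (s + r) * w) := by rw [key3]
    _ = T ((r : ℤ) + s) * Polynomial.toLaurent w := by
        rw [map_mul, toLaurent_X_pow]; push_cast; rw [show ((s : ℤ) + r) = (r : ℤ) + s by ring]


noncomputable def Hfun {k : Type*} [Field k] (a : LaurentPolynomial k) (ha : a ≠ 0)
    (F : ℕ → LaurentPolynomial k) (h0 : LaurentPolynomial k) : ℕ → LaurentPolynomial k
  | 0 => h0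
  | n + 1 => (key a ha (∑ j ∈ (Finset.range (n + 1)).attach,
      F (n + 1 - j.1) * Hfun a ha F h0 j.1)).choose
  decreasing_by all_goals exact Finset.mem_range.mp j.2

lemma Hfun_zero {k : Type*} [Field k] (a : LaurentPolynomial k) (ha : a ≠ 0)
    (F : ℕ → LaurentPolynomial k) (h0 : LaurentPolynomial k) :
    Hfun a ha F h0 0 = h0 := by rw [Hfun]

lemma Hfun_succ_spec {k : Type*} [Field k] (a : LaurentPolynomial k) (ha : a ≠ 0)
    (F : ℕ → LaurentPolynomial k) (h0 : LaurentPolynomial k) (n : ℕ) :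
    ∃ w : Polynomial k,
      a * Hfun a ha F h0 (n + 1) + ∑ j ∈ Finset.range (n + 1),
        F (n + 1 - j) * Hfun a ha F h0 j = Polynomial.toLaurent w := by
  have hsum : (∑ j ∈ (Finset.range (n + 1)).attach,
      F (n + 1 - j.1) * Hfun a ha F h0 j.1)
      = ∑ j ∈ Finset.range (n + 1), F (n + 1 - j) * Hfun a ha F h0 j :=
    Finset.sum_attach (Finset.range (n + 1)) (fun j => F (n + 1 - j) * Hfun a ha F h0 j)
  have heq : Hfun a ha F h0 (n + 1) = (key a ha (∑ j ∈ (Finset.range (n + 1)).attach,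
      F (n + 1 - j.1) * Hfun a ha F h0 j.1)).choose := by rw [Hfun]
  rw [heq, ← hsum]
  exact (key a ha _).choose_spec

/-- For any nonzero ideal `I` of `k[x^±][[t]]`, the intersection `I ∩ k[x][[t]]` is
nonzero, where `k[x][[t]]` sits inside `k[x^±][[t]]` via `Polynomial.toLaurent`. -/
theorem stmt_9 (k : Type*) [Field k]
    (I : Ideal (PowerSeries (LaurentPolynomial k))) (hI : I ≠ ⊥) :
    ∃ g : PowerSeries (Polynomial k),
      g ≠ 0 ∧ PowerSeries.map (Polynomial.toLaurent) g ∈ I := by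
  classical
  obtain ⟨f, hfI, hf0⟩ := (Submodule.ne_bot_iff I).mp hI
  have hex : ∃ n, PowerSeries.coeff n f ≠ 0 := by
    by_contra h
    push_neg at h
    exact hf0 (PowerSeries.ext fun n => by simpa using h n)
  set dd := Nat.find hex with hdd
  have ha : PowerSeries.coeff dd f ≠ 0 := Nat.find_spec hex
  have hlow : ∀ i < dd, PowerSeries.coeff i f = 0 := fun i hi => by
    simpa using Nat.find_min hex hi
  clear_value dd
  set a : LaurentPolynomial k := PowerSeries.coeff dd f with hadef
  set F : ℕ → LaurentPolynomial k :=
    fun j => PowerSeries.coeff (dd + j) f with hF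
  have hF0 : F 0 = a := by simp [hF, hadef]
  obtain ⟨m, p, hp⟩ := a.exists_T_pow
  have hp0 : p ≠ 0 := by
    intro h
    rw [h, map_zero] at hp
    exact ha ((isUnit_T (m : ℤ)).mul_right_cancel (a := a) (b := T (m : ℤ)) (c := 0)
      (by simp [← hp]))
  set H : ℕ → LaurentPolynomial k := Hfun a ha F (T (m : ℤ)) with hH
  set f' : PowerSeries (LaurentPolynomial k) := PowerSeries.mk F with hf'def
  have hsplit : f = PowerSeries.X ^ dd * f' := by
    refine PowerSeries.ext fun n => ?_
    rw [PowerSeries.coeff_X_pow_mul']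
    split_ifs with h
    · rw [hf'def, PowerSeries.coeff_mk, hF]
      show _ = PowerSeries.coeff (dd + (n - dd)) f
      rw [Nat.add_sub_cancel' h]
    · exact hlow n (not_le.mp h)
  set g : PowerSeries (LaurentPolynomial k) := f * PowerSeries.mk H with hg
  -- coefficients of f' * mk H
  have hcoeff : ∀ n : ℕ, PowerSeries.coeff n (f' * PowerSeries.mk H)
      = (∑ i ∈ Finset.range n, H i * F (n - i)) + H n * a := by
    intro n
    rw [mul_comm, PowerSeries.coeff_mul, Finset.Nat.sum_antidiagonal_eq_sum_range_succ_mk,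
      Finset.sum_range_succ]
    simp [hf'def, PowerSeries.coeff_mk, PowerSeries.constantCoeff_mk, hF0]
  have claim : ∀ n : ℕ, ∃ w : Polynomial k,
      PowerSeries.coeff n g = Polynomial.toLaurent w := by
    intro n
    rw [hg, hsplit, mul_assoc, PowerSeries.coeff_X_pow_mul']
    split_ifs with h
    · set n' := n - dd with hn'
      rcases Nat.eq_zero_or_eq_succ_pred n' with h0 | hsucc
      · refine ⟨p, ?_⟩
        rw [h0, hcoeff, hH, Hfun_zero, hp]
        simp only [Finset.range_zero, Finset.sum_empty, zero_add]
        ring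
      · set j := n' - 1 with hj
        obtain ⟨w, hw⟩ := Hfun_succ_spec a ha F (T (m : ℤ)) j
        refine ⟨w, ?_⟩
        rw [hsucc, hcoeff]
        rw [← hw, ← hH]
        have : ∑ i ∈ Finset.range (j + 1), H i * F (j + 1 - i)
            = ∑ i ∈ Finset.range (j + 1), F (j + 1 - i) * H i :=
          Finset.sum_congr rfl fun x _ => mul_comm _ _
        rw [show n'.pred.succ = j + 1 by omega] at *
        rw [this]
        ring
    · exact ⟨0, (map_zero _).symm⟩
  have hcoeffdd : PowerSeries.coeff dd g = Polynomial.toLaurent p := by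
    rw [hg, hsplit, mul_assoc, PowerSeries.coeff_X_pow_mul']
    rw [if_pos le_rfl, Nat.sub_self, hcoeff, hH, Hfun_zero, hp]
    simp only [Finset.range_zero, Finset.sum_empty, zero_add]
    ring
  have hgne : g ≠ 0 := by
    intro h
    apply hp0
    have : Polynomial.toLaurent p = 0 := by rw [← hcoeffdd, h, map_zero]
    exact Polynomial.toLaurent_injective (by simpa using this)
  refine ⟨PowerSeries.mk fun n => (claim n).choose, ?_, ?_⟩
  · intro h
    apply hgne
    have hmap : PowerSeries.map (Polynomial.toLaurent)
        (PowerSeries.mk fun n => (claim n).choose) = g := by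
      refine PowerSeries.ext fun n => ?_
      rw [PowerSeries.coeff_map, PowerSeries.coeff_mk]
      exact ((claim n).choose_spec).symm
    rw [← hmap, h, map_zero]
  · have hmap : PowerSeries.map (Polynomial.toLaurent)
        (PowerSeries.mk fun n => (claim n).choose) = g := by
      refine PowerSeries.ext fun n => ?_
      rw [PowerSeries.coeff_map, PowerSeries.coeff_mk]
      exact ((claim n).choose_spec).symm
    rw [hmap, hg]
    exact Ideal.mul_mem_right _ _ hfI
end

section
/- Let $(A, \mathfrak{m})$ be a Noetherian complete local ring and $I_1 \supseteq I_2 \supseteq \cdots$ a descending chain of $\mathfrak{m}$-primary (equivalently, open in the $\mathfrak{m}$-adic topology) ideals. Then either (i) for every $n \in \mathbb{N}$ there exists $i$ with $I_i \subseteq \mathfrak{m}^n$, or (ii) $\bigcap_i I_i \neq (0)$. -/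
/-- A Noetherian module killed by a maximal ideal is Artinian. -/
theorem aux_artinian_of_killed {A : Type*} [CommRing A] (𝔪 : Ideal A) [𝔪.IsMaximal]
    (M : Type*) [AddCommGroup M] [Module A M] [IsNoetherian A M]
    (h : ∀ c ∈ 𝔪, ∀ x : M, c • x = 0) : IsArtinian A M := by
  have ht : Module.IsTorsionBySet A M 𝔪 := fun x c => h c.1 c.2 x
  letI := ht.module
  haveI : IsScalarTower A (A ⧸ 𝔪) M := ht.isScalarTower
  letI : Field (A ⧸ 𝔪) := Ideal.Quotient.field 𝔪
  haveI : IsNoetherian (A ⧸ 𝔪) M := isNoetherian_of_tower A inferInstance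
  haveI : Module.Finite (A ⧸ 𝔪) M := ⟨IsNoetherian.noetherian ⊤⟩
  haveI hart : IsArtinian (A ⧸ 𝔪) M := isArtinian_of_fg_of_artinian' ..
  -- transfer Artinian-ness back along the carrier-preserving map of submodule lattices
  let t : Submodule A M → Submodule (A ⧸ 𝔪) M := fun N =>
    { carrier := N
      add_mem' := fun h1 h2 => N.add_mem h1 h2
      zero_mem' := N.zero_mem
      smul_mem' := by
        intro c x hx
        obtain ⟨a, rfl⟩ := Ideal.Quotient.mk_surjective c
        exact N.smul_mem a hx }
  have hmono : StrictMono t := by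
    intro N₁ N₂ hN
    rw [lt_iff_le_not_ge] at hN ⊢
    exact ⟨fun x hx => hN.1 hx, fun hc => hN.2 fun x hx => hc hx⟩
  exact hmono.wellFoundedLT

/-- The quotient of a Noetherian ring by a power of a maximal ideal is an Artinian module. -/
theorem aux_artinian_quot_pow (A : Type*) [CommRing A] [IsNoetherianRing A]
    (𝔪 : Ideal A) [𝔪.IsMaximal] (n : ℕ) : IsArtinian A (A ⧸ (𝔪 ^ n : Ideal A)) := by
  induction n with
  | zero =>
    haveI : Subsingleton (A ⧸ (𝔪 ^ 0 : Ideal A)) := by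
      rw [Submodule.Quotient.subsingleton_iff, pow_zero, Ideal.one_eq_top]
    infer_instance
  | succ n ih =>
    set S : Submodule A (A ⧸ (𝔪 ^ (n + 1) : Ideal A)) :=
      Submodule.map (𝔪 ^ (n + 1) : Ideal A).mkQ (𝔪 ^ n) with hS
    refine (isArtinian_iff_submodule_quotient S).mpr ⟨?_, ?_⟩
    · -- S is killed by 𝔪
      refine aux_artinian_of_killed 𝔪 S ?_
      intro c hc x
      obtain ⟨x, hx⟩ := x
      rw [hS] at hx
      obtain ⟨y, hy, rfl⟩ := Submodule.mem_map.mp hx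
      ext
      show c • (𝔪 ^ (n + 1) : Ideal A).mkQ y = 0
      rw [← map_smul, Submodule.mkQ_apply, Submodule.Quotient.mk_eq_zero]
      rw [smul_eq_mul, mul_comm, pow_succ]
      exact Ideal.mul_mem_mul hy hc
    · haveI := ih
      exact isArtinian_of_linearEquiv
        (Submodule.quotientQuotientEquivQuotient (𝔪 ^ (n + 1) : Ideal A) (𝔪 ^ n : Ideal A)
          (Ideal.pow_le_pow_right n.le_succ)).symm

/-- Chevalley's theorem: in a Noetherian complete local ring, a descending chain of
`𝔪`-primary (i.e. open) ideals is either cofinal with the powers of `𝔪`, or has nonzero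
intersection. -/
theorem stmt_13 (A : Type*) [CommRing A] [IsNoetherianRing A] [IsLocalRing A]
    [IsAdicComplete (IsLocalRing.maximalIdeal A) A]
    (I : ℕ → Ideal A) (hanti : Antitone I)
    (hopen : ∀ i, ∃ n : ℕ, (IsLocalRing.maximalIdeal A) ^ n ≤ I i) :
    (∀ n : ℕ, ∃ i, I i ≤ (IsLocalRing.maximalIdeal A) ^ n) ∨ (⨅ i, I i) ≠ ⊥ := by
  set 𝔪 := IsLocalRing.maximalIdeal A with h𝔪
  by_contra hcon
  push_neg at hcon
  obtain ⟨⟨n₀, hn₀⟩, hbot⟩ := hcon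
  -- Step 1: for each n, the chain i ↦ I i ⊔ 𝔪^n stabilizes
  have hstab : ∀ n : ℕ, ∃ i₀, ∀ j, i₀ ≤ j → I j ⊔ 𝔪 ^ n = I i₀ ⊔ 𝔪 ^ n := by
    intro n
    haveI := aux_artinian_quot_pow A 𝔪 n
    set mk := (𝔪 ^ n : Ideal A).mkQ
    have hmono : Monotone fun i => OrderDual.toDual (Submodule.map mk (I i)) := by
      intro i j hij
      exact Submodule.map_mono (hanti hij)
    obtain ⟨i₀, hi₀⟩ := IsArtinian.monotone_stabilizes ⟨_, hmono⟩
    refine ⟨i₀, fun j hj => ?_⟩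
    have : Submodule.map mk (I j) = Submodule.map mk (I i₀) :=
      congrArg OrderDual.ofDual (hi₀ j hj).symm
    have h2 := congrArg (Submodule.comap mk) this
    rwa [Submodule.comap_map_eq, Submodule.comap_map_eq, Submodule.ker_mkQ] at h2
  choose ii hii using hstab
  set J : ℕ → Ideal A := fun n => I (ii n) ⊔ 𝔪 ^ n with hJ
  -- basic facts about J
  have hJeq : ∀ n j, ii n ≤ j → I j ⊔ 𝔪 ^ n = J n := fun n j hj => hii n j hj
  have hJstep : ∀ n, J (n + 1) ⊔ 𝔪 ^ n = J n := by
    intro n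
    have h1 := hJeq n (max (ii n) (ii (n + 1))) (le_max_left _ _)
    have h2 := hJeq (n + 1) (max (ii n) (ii (n + 1))) (le_max_right _ _)
    rw [← h1, ← h2, sup_assoc, sup_eq_right.mpr (Ideal.pow_le_pow_right n.le_succ : 𝔪 ^ (n + 1) ≤ 𝔪 ^ n)]
  have hJle : ∀ n i, J n ≤ I i ⊔ 𝔪 ^ n := by
    intro n i
    have h1 := hJeq n (max (ii n) i) (le_max_left _ _)
    rw [← h1]
    exact sup_le_sup_right (hanti (le_max_right _ _)) _
  -- starting element
  have hJn₀ : ¬ J n₀ ≤ 𝔪 ^ n₀ := fun hc => hn₀ (ii n₀) (le_sup_left.trans hc)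
  obtain ⟨a₀, ha₀J, ha₀m⟩ := SetLike.not_le_iff_exists.mp hJn₀
  -- Step 2: successive approximations
  have step : ∀ n, ∀ a ∈ J n, ∃ b, b ∈ J (n + 1) ∧ a - b ∈ 𝔪 ^ n := by
    intro n a ha
    rw [← hJstep n] at ha
    obtain ⟨b, hb, c, hc, hbc⟩ := Submodule.mem_sup.mp ha
    exact ⟨b, hb, by rw [← hbc]; simpa using hc⟩
  choose! b hb1 hb2 using step
  set y : ℕ → A := fun k => Nat.rec a₀ (fun k ak => b (n₀ + k) ak) k with hy
  have hy0 : y 0 = a₀ := rfl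
  have hysucc : ∀ k, y (k + 1) = b (n₀ + k) (y k) := fun k => rfl
  have hymem : ∀ k, y k ∈ J (n₀ + k) := by
    intro k
    induction k with
    | zero => exact ha₀J
    | succ k ihk =>
      rw [hysucc]
      exact hb1 (n₀ + k) (y k) ihk
  have hydiff : ∀ k, y k - y (k + 1) ∈ 𝔪 ^ (n₀ + k) := by
    intro k
    rw [hysucc]
    exact hb2 (n₀ + k) (y k) (hymem k)
  have hycauchy' : ∀ k d, y k - y (k + d) ∈ 𝔪 ^ (n₀ + k) := by
    intro k d
    induction d with
    | zero => simp
    | succ d ihd =>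
      have h2 : y (k + d) - y (k + d + 1) ∈ 𝔪 ^ (n₀ + k) :=
        Ideal.pow_le_pow_right (by omega) (hydiff (k + d))
      have := (𝔪 ^ (n₀ + k)).add_mem ihd h2
      simpa [sub_add_sub_cancel, ← add_assoc] using this
  have hycauchy : ∀ k l, k ≤ l → y k - y l ∈ 𝔪 ^ (n₀ + k) := by
    intro k l hkl
    obtain ⟨d, rfl⟩ := Nat.exists_eq_add_of_le hkl
    exact hycauchy' k d
  -- Step 3: pass to the limit, using completeness
  set f : ℕ → A := fun n => y (n - n₀) with hf
  have hsmod : ∀ {m n : ℕ}, m ≤ n → f m ≡ f n [SMOD (𝔪 ^ m • ⊤ : Ideal A)] := by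
    intro m n hmn
    rw [SModEq.sub_mem, Ideal.smul_eq_mul, Ideal.mul_top]
    have h1 : y (m - n₀) - y (n - n₀) ∈ 𝔪 ^ (n₀ + (m - n₀)) :=
      hycauchy _ _ (by omega)
    exact Ideal.pow_le_pow_right (by omega) h1
  obtain ⟨L, hL⟩ := IsPrecomplete.prec (IsAdicComplete.toIsPrecomplete) @hsmod
  have hLmem : ∀ n, f n - L ∈ 𝔪 ^ n := by
    intro n
    have := (SModEq.sub_mem).mp (hL n)
    rwa [Ideal.smul_eq_mul, Ideal.mul_top] at this
  -- L lies in every I i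
  have hLI : ∀ i, L ∈ I i := by
    intro i
    obtain ⟨m, hm⟩ := hopen i
    set n := n₀ + m with hn
    have hfn : f n ∈ J n := by
      have : n - n₀ = m := by omega
      rw [hf]
      simpa [this, hn] using hymem m
    have hfI : f n ∈ I i := by
      have := hJle n i hfn
      rcases Submodule.mem_sup.mp this with ⟨u, hu, v, hv, huv⟩
      have hvI : v ∈ I i := hm (Ideal.pow_le_pow_right (by omega) hv)
      rw [← huv]; exact (I i).add_mem hu hvI
    have hdiff : f n - L ∈ I i := hm (Ideal.pow_le_pow_right (by omega) (hLmem n))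
    have := (I i).sub_mem hfI hdiff
    simpa using this
  -- contradiction: L = 0 but f n₀ ∉ 𝔪 ^ n₀
  have hL0 : L = 0 := by
    have : L ∈ ⨅ i, I i := Submodule.mem_iInf _ |>.mpr hLI
    rwa [hbot, Submodule.mem_bot] at this
  have hfn₀ : f n₀ ∈ 𝔪 ^ n₀ := by
    have := hLmem n₀
    rwa [hL0, sub_zero] at this
  have : f n₀ = a₀ := by show y (n₀ - n₀) = a₀; rw [Nat.sub_self]; exact hy0
  exact ha₀m (this ▸ hfn₀)
end
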